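/- Let ν and σ be positive Borel measures on ℝ and X ⊆ ℝ a Borel set such that the symmetric derivative (dν/dσ)(x) exists and lies in (0, ∞) for all x ∈ X. Then the restricted measures 1_X·ν and 1_X·σ are mutually absolutely continuous. -/

import Mathlib

open MeasureTheory
open MeasureTheory Set Filter Metric
open scoped NNReal ENNReal

/-- The key pointwise package: near a point where the symmetric derivative exists in `(0,∞)`,
the two interval measures are comparable and finite. -/
lemma pack19 (ν σ : Measure ℝ) (x : ℝ) (c : ENNReal) (hc0 : 0 < c) (hct : c < ⊤)
    (hten : Tendsto
      (fun ε : ℝ => ν (Set.Icc (x - ε) (x + ε)) / σ (Set.Icc (x - ε) (x + ε)))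
      (nhdsWithin 0 (Set.Ioi 0)) (nhds c)) :
    ∃ n : ℕ, ∀ᶠ ε in nhdsWithin (0:ℝ) (Set.Ioi 0),
      (ν (Set.Icc (x - ε) (x + ε)) ≤ ((n:ENNReal)+1) * σ (Set.Icc (x - ε) (x + ε)) ∧
        ν (Set.Icc (x - ε) (x + ε)) < ⊤ ∧ σ (Set.Icc (x - ε) (x + ε)) < ⊤) ∧
      (σ (Set.Icc (x - ε) (x + ε)) ≤ ((n:ENNReal)+1) * ν (Set.Icc (x - ε) (x + ε)) ∧
        σ (Set.Icc (x - ε) (x + ε)) < ⊤ ∧ ν (Set.Icc (x - ε) (x + ε)) < ⊤) := by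
  have hc2 : c / 2 ≠ 0 := by
    simp [ENNReal.div_eq_top, hc0.ne']
  have hc2t : c / 2 ≠ ⊤ := by
    exact ne_top_of_le_ne_top hct.ne ENNReal.half_le_self
  have hc1t : c + 1 ≠ ⊤ := by
    simp [hct.ne]
  have hmaxt : max (c + 1) (c / 2)⁻¹ ≠ ⊤ := by
    simp [hc1t, ENNReal.inv_ne_top, hc2]
  obtain ⟨n, hn⟩ := ENNReal.exists_nat_gt hmaxt
  refine ⟨n, ?_⟩
  have hmem : Set.Ioo (c / 2) (c + 1) ∈ nhds c :=
    Ioo_mem_nhds (ENNReal.half_lt_self hc0.ne' hct.ne) (ENNReal.lt_add_right hct.ne one_ne_zero)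
  filter_upwards [hten hmem] with ε hε
  set V := ν (Set.Icc (x - ε) (x + ε)) with hV
  set S := σ (Set.Icc (x - ε) (x + ε)) with hS
  have hr1 : c / 2 < V / S := hε.1
  have hr2 : V / S < c + 1 := hε.2
  have hS0 : S ≠ 0 := by
    intro h0
    rcases eq_or_ne V 0 with hV0 | hV0
    · rw [h0, hV0] at hr1
      simp only [ENNReal.zero_div] at hr1
      exact hc2 (le_bot_iff.1 hr1.le)
    · rw [h0, ENNReal.div_zero hV0] at hr2
      exact (hr2.trans_le le_top).ne rfl
  have hSt : S ≠ ⊤ := by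
    intro h0
    rw [h0, ENNReal.div_top] at hr1
    exact hc2 (le_bot_iff.1 hr1.le)
  have key1 : V ≤ (c + 1) * S :=
    (ENNReal.div_le_iff_le_mul (Or.inl hS0) (Or.inl hSt)).1 hr2.le
  have hVt : V ≠ ⊤ := by
    intro h0
    rw [h0] at key1
    exact (ENNReal.mul_ne_top hc1t hSt) (top_le_iff.1 key1)
  have key2' : c / 2 * S ≤ V :=
    (ENNReal.le_div_iff_mul_le (Or.inl hS0) (Or.inl hSt)).1 hr1.le
  have key2 : S ≤ (c / 2)⁻¹ * V := by
    calc S = (c / 2)⁻¹ * (c / 2 * S) := by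
          rw [← mul_assoc, ENNReal.inv_mul_cancel hc2 hc2t, one_mul]
      _ ≤ (c / 2)⁻¹ * V := by gcongr
  have hn1 : c + 1 ≤ (n : ENNReal) + 1 :=
    le_trans (le_max_left _ _) (le_trans hn.le le_self_add)
  have hn2 : (c / 2)⁻¹ ≤ (n : ENNReal) + 1 :=
    le_trans (le_max_right _ _) (le_trans hn.le le_self_add)
  exact ⟨⟨key1.trans (by gcongr), hVt.lt_top, hSt.lt_top⟩,
    ⟨key2.trans (by gcongr), hSt.lt_top, hVt.lt_top⟩⟩

/-- One direction: if the interval measures are eventually comparable (with finiteness)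
at every point of `X`, then `ν.restrict X ≪ σ.restrict X`. -/
lemma main19 (ν σ : Measure ℝ) (X : Set ℝ)
    (h : ∀ x ∈ X, ∃ n : ℕ, ∀ᶠ ε in nhdsWithin (0:ℝ) (Set.Ioi 0),
      ν (Set.Icc (x - ε) (x + ε)) ≤ ((n:ENNReal)+1) * σ (Set.Icc (x - ε) (x + ε)) ∧
        ν (Set.Icc (x - ε) (x + ε)) < ⊤ ∧ σ (Set.Icc (x - ε) (x + ε)) < ⊤) :
    ν.restrict X ≪ σ.restrict X := by
  refine Measure.AbsolutelyContinuous.mk fun s hs hσs => ?_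
  rw [Measure.restrict_apply hs] at hσs ⊢
  set Y := s ∩ X with hYdef
  have hYX : Y ⊆ X := Set.inter_subset_right
  set Z : ℕ → ℚ → Set ℝ := fun n q =>
    {x | x ∈ Y ∧ x ∈ Set.Icc (q:ℝ) ((q:ℝ) + 1/((n:ℝ)+1)) ∧
      ∀ ε ∈ Set.Ioc (0:ℝ) (3/((n:ℝ)+1)),
        ν (Set.Icc (x - ε) (x + ε)) ≤ ((n:ENNReal)+1) * σ (Set.Icc (x - ε) (x + ε)) ∧
          ν (Set.Icc (x - ε) (x + ε)) < ⊤ ∧ σ (Set.Icc (x - ε) (x + ε)) < ⊤} with hZdef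
  have hcov : Y ⊆ ⋃ p : ℕ × ℚ, Z p.1 p.2 := by
    intro x hx
    obtain ⟨n₀, hev⟩ := h x (hYX hx)
    rw [Filter.eventually_iff, mem_nhdsGT_iff_exists_Ioc_subset] at hev
    obtain ⟨δ, hδ0, hδ⟩ := hev
    rw [Set.mem_Ioi] at hδ0
    obtain ⟨m, hm⟩ := exists_nat_ge (3/δ)
    set n := n₀ + m with hn
    have hnpos : (0:ℝ) < (n:ℝ) + 1 := by positivity
    have hmn : (3:ℝ)/δ ≤ (n:ℝ) + 1 := by
      refine hm.trans ?_
      have : (m:ℝ) ≤ (n:ℝ) := by exact_mod_cast Nat.le_add_left m n₀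
      linarith
    have h3 : (3:ℝ)/((n:ℝ)+1) ≤ δ := by
      rw [div_le_iff₀ hnpos]
      rw [div_le_iff₀ hδ0] at hmn
      linarith
    have h1pos : (0:ℝ) < 1/((n:ℝ)+1) := by positivity
    obtain ⟨q, hq1, hq2⟩ := exists_rat_btwn (show x - 1/((n:ℝ)+1) < x by linarith)
    refine Set.mem_iUnion.2 ⟨(n, q), hx, ⟨hq2.le, by linarith⟩, fun ε hε => ?_⟩
    have hP := hδ ⟨hε.1, hε.2.trans h3⟩
    refine ⟨hP.1.trans ?_, hP.2.1, hP.2.2⟩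
    gcongr
    exact Nat.le_add_right n₀ m
  have hZ0 : ∀ p : ℕ × ℚ, ν (Z p.1 p.2) = 0 := by
    rintro ⟨n, q⟩
    rcases Set.eq_empty_or_nonempty (Z n q) with hZe | ⟨x₀, hx₀⟩
    · simp [hZe]
    obtain ⟨hx₀Y, hx₀q, hx₀P⟩ := hx₀
    set I := Set.Icc (x₀ - 3/((n:ℝ)+1)) (x₀ + 3/((n:ℝ)+1)) with hIdef
    have h3pos : (0:ℝ) < 3/((n:ℝ)+1) := by positivity
    have h13 : (1:ℝ)/((n:ℝ)+1) ≤ 3/((n:ℝ)+1) := by gcongr <;> norm_num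
    have h113 : (1:ℝ)/((n:ℝ)+1) + 1/((n:ℝ)+1) ≤ 3/((n:ℝ)+1) := by
      rw [← add_div]
      gcongr <;> norm_num
    have hPI := hx₀P (3/((n:ℝ)+1)) ⟨h3pos, le_refl _⟩
    set ν' := ν.restrict I with hν'def
    set σ' := σ.restrict I with hσ'def
    haveI : IsFiniteMeasure ν' := ⟨by rw [hν'def, Measure.restrict_apply_univ]; exact hPI.2.1⟩
    haveI : IsFiniteMeasure σ' := ⟨by rw [hσ'def, Measure.restrict_apply_univ]; exact hPI.2.2⟩
    set μ := ν' + σ' with hμdef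
    have hZI : Z n q ⊆ I := by
      rintro x ⟨-, hxq, -⟩
      exact ⟨by linarith [hxq.1, hx₀q.2, h13], by linarith [hxq.2, hx₀q.1, h13]⟩
    have hsub : ∀ x ∈ Z n q, ∀ ε ∈ Set.Ioc (0:ℝ) (1/((n:ℝ)+1)),
        Set.Icc (x-ε) (x+ε) ⊆ I := by
      rintro x ⟨-, hxq, -⟩ ε hε y hy
      obtain ⟨hy1, hy2⟩ := hy
      exact ⟨by linarith [hxq.1, hx₀q.2, hε.2, h113], by linarith [hxq.2, hx₀q.1, hε.2, h113]⟩
    have hνμ : ν' ≪ μ := Measure.absolutelyContinuous_of_le (Measure.le_add_right le_rfl)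
    set v := Besicovitch.vitaliFamily μ with hvdef
    have hcast : (((n:ℝ≥0)+1 : ℝ≥0) : ℝ≥0∞) = (n:ENNReal)+1 := by push_cast; ring
    have hfreq : ∀ x ∈ Z n q, ∃ᶠ a in v.filterAt x, ν' a ≤ (((n:ℝ≥0)+1) • σ') a := by
      intro x hx
      apply (Besicovitch.tendsto_filterAt μ x).frequently
      apply Filter.Eventually.frequently
      have hmem : Set.Ioc (0:ℝ) (1/((n:ℝ)+1)) ∈ nhdsWithin (0:ℝ) (Set.Ioi 0) :=
        Ioc_mem_nhdsGT_of_mem ⟨le_refl _, by positivity⟩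
      filter_upwards [hmem] with ε hε
      rw [Real.closedBall_eq_Icc]
      have hP := hx.2.2 ε ⟨hε.1, hε.2.trans h13⟩
      have hIccI := hsub x hx ε hε
      have e1 : ν' (Set.Icc (x-ε) (x+ε)) = ν (Set.Icc (x-ε) (x+ε)) := by
        rw [hν'def, Measure.restrict_apply measurableSet_Icc,
          Set.inter_eq_self_of_subset_left hIccI]
      have e2 : σ' (Set.Icc (x-ε) (x+ε)) = σ (Set.Icc (x-ε) (x+ε)) := by
        rw [hσ'def, Measure.restrict_apply measurableSet_Icc,
          Set.inter_eq_self_of_subset_left hIccI]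
      rw [Measure.smul_apply, e1, e2, ENNReal.smul_def, hcast]
      exact hP.1
    have hle := v.measure_le_of_frequently_le (((n:ℝ≥0)+1) • σ') hνμ (Z n q) hfreq
    have hσ'Z : σ' (Z n q) = 0 := by
      rw [hσ'def, Measure.restrict_apply' measurableSet_Icc]
      refine measure_mono_null ?_ hσs
      intro y hy
      exact hy.1.1
    rw [Measure.smul_apply, hσ'Z, smul_zero] at hle
    have hν'Z : ν' (Z n q) = 0 := le_antisymm hle (zero_le)
    rw [hν'def, Measure.restrict_apply' measurableSet_Icc,
      Set.inter_eq_self_of_subset_left hZI] at hν'Z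
    exact hν'Z
  refine le_antisymm ?_ (zero_le)
  calc ν Y ≤ ν (⋃ p : ℕ × ℚ, Z p.1 p.2) := measure_mono hcov
    _ ≤ ∑' p : ℕ × ℚ, ν (Z p.1 p.2) := measure_iUnion_le _
    _ = 0 := by simp [hZ0]

theorem stmt19 (ν σ : Measure ℝ) (X : Set ℝ) (hX : MeasurableSet X)
    (h : ∀ x ∈ X, ∃ c : ENNReal, 0 < c ∧ c < ⊤ ∧
      Filter.Tendsto
        (fun ε : ℝ => ν (Set.Icc (x - ε) (x + ε)) / σ (Set.Icc (x - ε) (x + ε)))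
        (nhdsWithin 0 (Set.Ioi 0)) (nhds c)) :
    ν.restrict X ≪ σ.restrict X ∧ σ.restrict X ≪ ν.restrict X := by
  constructor
  · apply main19
    intro x hx
    obtain ⟨c, hc0, hct, hten⟩ := h x hx
    obtain ⟨n, hev⟩ := pack19 ν σ x c hc0 hct hten
    exact ⟨n, hev.mono fun ε hε => hε.1⟩
  · apply main19
    intro x hx
    obtain ⟨c, hc0, hct, hten⟩ := h x hx
    obtain ⟨n, hev⟩ := pack19 ν σ x c hc0 hct hten
    exact ⟨n, hev.mono fun ε hε => hε.2⟩
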